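/- For z, w in the open unit disc with Im z > 0 and Im w > 0, the 2-point correlation of complex zeros satisfies ρ₂ᶜ(z,w) < ρ₁ᶜ(z)ρ₁ᶜ(w), where ρ₁ᶜ(z) = |z-z̄|/(π|1-z²|(1-|z|²)²) and ρ₂ᶜ(z,w) = ρ₁ᶜ(z)ρ₁ᶜ(w) + (π²|1-z²||1-w²|)⁻¹ (|(z-w)/(1-zw)|² - |(z-w̄)/(1-zw̄)|²). -/

import Mathlib

open Complex

/-- The 1-point correlation function of complex zeros:
ρ₁ᶜ(z) = |z - z̄| / (π |1-z²| (1-|z|²)²). -/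
noncomputable def rho1c (z : ℂ) : ℝ :=
  ‖z - (starRingEnd ℂ) z‖
    / (Real.pi * ‖1 - z ^ 2‖ * (1 - ‖z‖ ^ 2) ^ 2)

/-- The 2-point correlation function of complex zeros. -/
noncomputable def rho2c (z w : ℂ) : ℝ :=
  rho1c z * rho1c w
    + (Real.pi ^ 2 * ‖1 - z ^ 2‖ * ‖1 - w ^ 2‖)⁻¹
      * (‖(z - w) / (1 - z * w)‖ ^ 2
          - ‖(z - (starRingEnd ℂ) w) / (1 - z * (starRingEnd ℂ) w)‖ ^ 2)

/-- Negative correlation of complex zeros: ρ₂ᶜ(z,w) < ρ₁ᶜ(z) ρ₁ᶜ(w) for z, w in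
the upper half of the open unit disc. -/
theorem complex_zeros_negatively_correlated (z w : ℂ)
    (hz : ‖z‖ < 1 ∧ 0 < z.im) (hw : ‖w‖ < 1 ∧ 0 < w.im) :
    rho2c z w < rho1c z * rho1c w := by
  obtain ⟨hz1, hz2⟩ := hz
  obtain ⟨hw1, hw2⟩ := hw
  have haz := norm_nonneg z
  have haw := norm_nonneg w
  have hz2n : (1:ℂ) - z ^ 2 ≠ 0 := by
    intro h
    rw [sub_eq_zero] at h
    have : ‖z ^ 2‖ = 1 := by rw [← h]; simp
    rw [norm_pow] at this
    nlinarith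
  have hw2n : (1:ℂ) - w ^ 2 ≠ 0 := by
    intro h
    rw [sub_eq_zero] at h
    have : ‖w ^ 2‖ = 1 := by rw [← h]; simp
    rw [norm_pow] at this
    nlinarith
  have hB : (1:ℂ) - z * w ≠ 0 := by
    intro h
    rw [sub_eq_zero] at h
    have : ‖z * w‖ = 1 := by rw [← h]; simp
    rw [norm_mul] at this
    nlinarith
  have hA : (1:ℂ) - z * (starRingEnd ℂ) w ≠ 0 := by
    intro h
    rw [sub_eq_zero] at h
    have : ‖z * (starRingEnd ℂ) w‖ = 1 := by rw [← h]; simp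
    rw [norm_mul, Complex.norm_conj] at this
    nlinarith
  -- key inequality
  have hnz : Complex.normSq z < 1 := by
    rw [← Complex.sq_norm]; nlinarith
  have hnw : Complex.normSq w < 1 := by
    rw [← Complex.sq_norm]; nlinarith
  have key : ‖(z - w) / (1 - z * w)‖ ^ 2
      < ‖(z - (starRingEnd ℂ) w) / (1 - z * (starRingEnd ℂ) w)‖ ^ 2 := by
    rw [norm_div, norm_div, div_pow, div_pow, Complex.sq_norm, Complex.sq_norm,
      Complex.sq_norm, Complex.sq_norm,
      div_lt_div_iff₀ (Complex.normSq_pos.mpr hB) (Complex.normSq_pos.mpr hA)]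
    have hBb : Complex.normSq (1 - z * w) = Complex.normSq (z - (starRingEnd ℂ) w)
        + (1 - Complex.normSq z) * (1 - Complex.normSq w) := by
      simp only [Complex.normSq_apply, Complex.sub_re, Complex.sub_im, Complex.mul_re,
        Complex.mul_im, Complex.one_re, Complex.one_im, Complex.conj_re, Complex.conj_im]
      ring
    have hAa : Complex.normSq (1 - z * (starRingEnd ℂ) w) = Complex.normSq (z - w)
        + (1 - Complex.normSq z) * (1 - Complex.normSq w) := by
      simp only [Complex.normSq_apply, Complex.sub_re, Complex.sub_im, Complex.mul_re,
        Complex.mul_im, Complex.one_re, Complex.one_im, Complex.conj_re, Complex.conj_im]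
      ring
    have hab : Complex.normSq (z - w) < Complex.normSq (z - (starRingEnd ℂ) w) := by
      simp only [Complex.normSq_apply, Complex.sub_re, Complex.sub_im,
        Complex.conj_re, Complex.conj_im]
      nlinarith
    have ha0 : 0 ≤ Complex.normSq (z - w) := Complex.normSq_nonneg _
    have hc : 0 < (1 - Complex.normSq z) * (1 - Complex.normSq w) :=
      mul_pos (by linarith) (by linarith)
    rw [hBb, hAa]
    nlinarith [mul_pos (sub_pos.mpr hab) hc, mul_nonneg (sub_pos.mpr hab).le ha0,
      mul_nonneg (sub_pos.mpr hab).le (Complex.normSq_nonneg (z - (starRingEnd ℂ) w))]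
  have hpref : 0 < (Real.pi ^ 2 * ‖1 - z ^ 2‖ * ‖1 - w ^ 2‖)⁻¹ := by
    have := Real.pi_pos
    have h1 := norm_pos_iff.mpr hz2n
    have h2 := norm_pos_iff.mpr hw2n
    positivity
  have hterm : (Real.pi ^ 2 * ‖1 - z ^ 2‖ * ‖1 - w ^ 2‖)⁻¹
      * (‖(z - w) / (1 - z * w)‖ ^ 2
          - ‖(z - (starRingEnd ℂ) w) / (1 - z * (starRingEnd ℂ) w)‖ ^ 2) < 0 :=
    mul_neg_of_pos_of_neg hpref (by linarith)
  unfold rho2c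
  linarith
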